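/- arXiv:2106.00176 — 4 statements merged into one kernel-verified Lean document; each statement's English description precedes it below -/
import Mathlib

section
/- Fix a real number R > 1, an integer n ≥ 2, and an integer m ≥ 3. Define β : ℤ → ℝ by β(k) = R^{d(k)} with d(k) = min_{l ∈ ℤ} |k − 2nl|, and let S be the bounded invertible operator on ℓ²(ℤ, ℂ) with S e_k = (β(k+1)/β(k)) e_{k+1} for all k ∈ ℤ. Let v ∈ ℓ²(ℤ, ℂ) be the vector v = (1/m) · Σ_{l=0}^{m²} e_{2ln}. Then ‖v‖ = √(m² + 1)/m and ‖(S^n + S^{-n}) v‖ ≥ 2 R^n. -/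
noncomputable abbrev ellTwo : Type := lp (fun _ : ℤ => ℂ) 2

noncomputable def stdBasis (k : ℤ) : ellTwo := lp.single 2 k (1 : ℂ)

noncomputable def distMult (n : ℕ) (k : ℤ) : ℤ :=
  sInf (Set.range fun l : ℤ => |k - 2 * (n : ℤ) * l|)

noncomputable def weightβ (R : ℝ) (n : ℕ) (k : ℤ) : ℝ := R ^ distMult n k

open scoped ComplexOrder in
lemma inner_stdBasis (j k : ℤ) :
    (inner ℂ (stdBasis j) (stdBasis k) : ℂ) = if k = j then 1 else 0 := by
  rw [stdBasis, stdBasis, lp.inner_single_left]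
  by_cases h : k = j
  · subst h; simp [lp.single_apply_self]
  · rw [lp.single_apply_ne 2 k 1 (Ne.symm h)]
    simp [h]

lemma distMult_lower (n : ℕ) (k : ℤ) (b : ℤ)
    (hb : ∀ l : ℤ, b ≤ |k - 2 * (n : ℤ) * l|) : b ≤ distMult n k :=
  le_csInf ⟨|k - 2 * (n:ℤ) * 0|, ⟨0, rfl⟩⟩ (by rintro x ⟨l, rfl⟩; exact hb l)

lemma distMult_upper (n : ℕ) (k : ℤ) (l : ℤ) : distMult n k ≤ |k - 2 * (n : ℤ) * l| :=
  csInf_le ⟨0, by rintro x ⟨l', rfl⟩; exact abs_nonneg _⟩ ⟨l, rfl⟩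

lemma distMult_mul (n : ℕ) (l : ℤ) : distMult n (2 * l * n) = 0 := by
  refine le_antisymm ?_ (distMult_lower _ _ _ fun l' => abs_nonneg _)
  have := distMult_upper n (2 * l * n) l
  simpa [mul_comm, mul_left_comm] using this

lemma distMult_odd (n : ℕ) (hn : 0 < n) (k : ℤ) (hk : ∃ l : ℤ, k = 2 * l * n + n) :
    distMult n k = n := by
  obtain ⟨l, rfl⟩ := hk
  refine le_antisymm ?_ (distMult_lower _ _ _ fun l' => ?_)
  · have := distMult_upper n (2 * l * n + n) l
    have h1 : |2 * l * n + (n:ℤ) - 2 * n * l| = n := by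
      have : 2 * l * n + (n:ℤ) - 2 * n * l = n := by ring
      rw [this, abs_of_nonneg (by positivity)]
    linarith [this, h1.le]
  · have h2 : 2 * l * n + (n:ℤ) - 2 * n * l' = n * (2 * (l - l') + 1) := by ring
    rw [h2, abs_mul, abs_of_nonneg (by positivity : (0:ℤ) ≤ (n:ℤ))]
    have : (1:ℤ) ≤ |2 * (l - l') + 1| :=
      Int.one_le_abs (by omega)
    nlinarith [Int.natCast_pos.mpr hn]

lemma weightβ_pos {R : ℝ} (hR : 1 < R) (n : ℕ) (k : ℤ) : 0 < weightβ R n k :=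
  zpow_pos (by linarith) _

lemma weightβ_mul {R : ℝ} (n : ℕ) (l : ℤ) : weightβ R n (2 * l * n) = 1 := by
  rw [weightβ, distMult_mul, zpow_zero]

lemma weightβ_odd {R : ℝ} (n : ℕ) (hn : 0 < n) (k : ℤ) (hk : ∃ l : ℤ, k = 2 * l * n + n) :
    weightβ R n k = R ^ n := by
  rw [weightβ, distMult_odd n hn k hk, zpow_natCast]

lemma S_pow_apply {R : ℝ} (hR : 1 < R) {n : ℕ} {S : ellTwo →L[ℂ] ellTwo}
    (hS : ∀ k : ℤ, S (stdBasis k) =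
      ((weightβ R n (k + 1) / weightβ R n k : ℝ) : ℂ) • stdBasis (k + 1)) :
    ∀ (j : ℕ) (k : ℤ), (S ^ j) (stdBasis k) =
      ((weightβ R n (k + j) / weightβ R n k : ℝ) : ℂ) • stdBasis (k + j) := by
  intro j
  induction j with
  | zero =>
    intro k
    simp [div_self (weightβ_pos hR n k).ne']
  | succ j ih =>
    intro k
    have : (S ^ (j + 1)) (stdBasis k) = (S ^ j) (S (stdBasis k)) := by
      rw [pow_succ]; rfl
    rw [this, hS k, map_smul, ih (k + 1)]
    rw [smul_smul]
    have harg : k + 1 + (j : ℤ) = k + ((j : ℕ) + 1 : ℕ) := by push_cast; ring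
    rw [harg]
    congr 1
    rw [← Complex.ofReal_mul]
    congr 1
    have h1 := (weightβ_pos hR n k).ne'
    have h2 := (weightβ_pos hR n (k + 1)).ne'
    field_simp

lemma Sinv_apply {R : ℝ} (hR : 1 < R) {n : ℕ} {S Sinv : ellTwo →L[ℂ] ellTwo}
    (hinv₂ : Sinv ∘L S = 1)
    (hS : ∀ k : ℤ, S (stdBasis k) =
      ((weightβ R n (k + 1) / weightβ R n k : ℝ) : ℂ) • stdBasis (k + 1)) :
    ∀ k : ℤ, Sinv (stdBasis k) =
      ((weightβ R n (k - 1) / weightβ R n k : ℝ) : ℂ) • stdBasis (k - 1) := by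
  intro k
  have h0 : Sinv (S (stdBasis (k - 1))) = stdBasis (k - 1) := by
    rw [← ContinuousLinearMap.comp_apply, hinv₂]; rfl
  rw [hS (k - 1)] at h0
  have harg : k - 1 + 1 = k := by ring
  rw [harg, map_smul] at h0
  have hc : ((weightβ R n k / weightβ R n (k - 1) : ℝ) : ℂ) ≠ 0 := by
    simp only [ne_eq, Complex.ofReal_eq_zero]
    exact (div_pos (weightβ_pos hR n k) (weightβ_pos hR n (k - 1))).ne'
  have := congrArg (fun x => ((weightβ R n k / weightβ R n (k - 1) : ℝ) : ℂ)⁻¹ • x) h0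
  simp only [smul_smul, inv_mul_cancel₀ hc, one_smul] at this
  rw [this, ← Complex.ofReal_inv, inv_div]

lemma Sinv_pow_apply {R : ℝ} (hR : 1 < R) {n : ℕ} {S Sinv : ellTwo →L[ℂ] ellTwo}
    (hinv₂ : Sinv ∘L S = 1)
    (hS : ∀ k : ℤ, S (stdBasis k) =
      ((weightβ R n (k + 1) / weightβ R n k : ℝ) : ℂ) • stdBasis (k + 1)) :
    ∀ (j : ℕ) (k : ℤ), (Sinv ^ j) (stdBasis k) =
      ((weightβ R n (k - j) / weightβ R n k : ℝ) : ℂ) • stdBasis (k - j) := by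
  intro j
  induction j with
  | zero =>
    intro k
    simp [div_self (weightβ_pos hR n k).ne']
  | succ j ih =>
    intro k
    have : (Sinv ^ (j + 1)) (stdBasis k) = (Sinv ^ j) (Sinv (stdBasis k)) := by
      rw [pow_succ]; rfl
    rw [this, Sinv_apply hR hinv₂ hS k, map_smul, ih (k - 1)]
    rw [smul_smul]
    have harg : k - 1 - (j : ℤ) = k - ((j : ℕ) + 1 : ℕ) := by push_cast; ring
    rw [harg]
    congr 1
    rw [← Complex.ofReal_mul]
    congr 1
    have h1 := (weightβ_pos hR n k).ne'
    have h2 := (weightβ_pos hR n (k - 1)).ne'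
    field_simp

lemma orthonormal_stdBasis : Orthonormal ℂ stdBasis := by
  rw [orthonormal_iff_ite]
  intro i j
  rw [inner_stdBasis]
  simp [eq_comm]

/-- Let `S` be the bounded invertible bilateral weighted shift on `ℓ²(ℤ, ℂ)` with
`S e_k = (β(k+1)/β(k)) e_{k+1}`, and let `v = (1/m) ∑_{l=0}^{m²} e_{2ln}` for `m ≥ 3`.
Then `‖v‖ = √(m² + 1)/m` and `‖(Sⁿ + S⁻ⁿ) v‖ ≥ 2 Rⁿ`. -/
theorem weighted_shift_test_vector (R : ℝ) (hR : 1 < R) (n : ℕ) (hn : 2 ≤ n)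
    (m : ℕ) (hm : 3 ≤ m)
    (S Sinv : ellTwo →L[ℂ] ellTwo)
    (hinv₁ : S ∘L Sinv = 1) (hinv₂ : Sinv ∘L S = 1)
    (hS : ∀ k : ℤ, S (stdBasis k) =
      ((weightβ R n (k + 1) / weightβ R n k : ℝ) : ℂ) • stdBasis (k + 1))
    (v : ellTwo)
    (hv : v = ((1 : ℂ) / m) • ∑ l ∈ Finset.range (m ^ 2 + 1), stdBasis (2 * (l : ℤ) * n)) :
    ‖v‖ = Real.sqrt ((m : ℝ) ^ 2 + 1) / m ∧ 2 * R ^ n ≤ ‖(S ^ n + Sinv ^ n) v‖ := by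
  have hn0 : 0 < n := by omega
  have hnZ : (n : ℤ) ≠ 0 := by exact_mod_cast hn0.ne'
  have hm0 : (0:ℝ) < m := by exact_mod_cast (by omega : 0 < m)
  have hcancel : ∀ a b : ℤ, 2 * a * (n:ℤ) = 2 * b * n → a = b := by
    intro a b h
    have := mul_right_cancel₀ hnZ h
    omega
  -- Part 1 : the norm of v
  have hinj : Function.Injective (fun l : ℕ => 2 * (l : ℤ) * n) := by
    intro a b h
    exact_mod_cast hcancel a b h
  have hT : (inner ℂ v v : ℂ) = ((((m:ℝ)^2 + 1) / m^2 : ℝ) : ℂ) := by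
    rw [hv, inner_smul_left, inner_smul_right]
    have := (orthonormal_stdBasis.comp _ hinj).inner_sum (fun _ => (1:ℂ)) (fun _ => (1:ℂ))
      (Finset.range (m ^ 2 + 1))
    simp only [Function.comp, one_smul, map_one, one_mul, Finset.sum_const,
      Finset.card_range, nsmul_eq_mul, mul_one] at this
    rw [this]
    push_cast
    rw [map_div₀, map_one, Complex.conj_natCast]
    have : (m:ℂ) ≠ 0 := by exact_mod_cast hm0.ne'
    field_simp
  have hnormv_sq : ‖v‖ ^ 2 = ((m:ℝ)^2 + 1) / m^2 := by
    rw [← inner_self_eq_norm_sq (𝕜 := ℂ) v, hT]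
    exact RCLike.ofReal_re _
  have hnormv : ‖v‖ = Real.sqrt ((m : ℝ) ^ 2 + 1) / m := by
    rw [← Real.sqrt_sq (norm_nonneg v), hnormv_sq,
      Real.sqrt_div (by positivity) _, Real.sqrt_sq hm0.le]
  refine ⟨hnormv, ?_⟩
  have hRn : (0:ℝ) < R ^ n := by positivity
  set w' : ellTwo := ∑ l ∈ Finset.range (m ^ 2 + 1),
      (((R ^ n : ℝ) : ℂ) • stdBasis (2 * (l:ℤ) * n + n) +
        ((R ^ n : ℝ) : ℂ) • stdBasis (2 * (l:ℤ) * n - n)) with hw'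
  have hterm : ∀ l : ℕ, (S ^ n + Sinv ^ n) (stdBasis (2 * (l:ℤ) * n)) =
      ((R ^ n : ℝ) : ℂ) • stdBasis (2 * (l:ℤ) * n + n) +
        ((R ^ n : ℝ) : ℂ) • stdBasis (2 * (l:ℤ) * n - n) := by
    intro l
    rw [ContinuousLinearMap.add_apply, S_pow_apply hR hS n _, Sinv_pow_apply hR hinv₂ hS n _,
      weightβ_mul, weightβ_odd n hn0 _ ⟨l, rfl⟩, weightβ_odd n hn0 _ ⟨(l:ℤ) - 1, by ring⟩]
    norm_num
  have happ : (S ^ n + Sinv ^ n) v = ((1 : ℂ) / m) • w' := by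
    rw [hv, map_smul, map_sum, hw']
    congr 1
    exact Finset.sum_congr rfl fun l _ => hterm l
  have hu_inj : Function.Injective (fun l : ℕ => 2 * (l : ℤ) * n + n) := by
    intro a b h
    simp only at h
    exact_mod_cast hcancel a b (by omega)
  set u : ellTwo := ∑ l ∈ Finset.range (m ^ 2), stdBasis (2 * (l:ℤ) * n + n) with hu
  have huu : (inner ℂ u u : ℂ) = ((m:ℝ)^2 : ℝ) := by
    rw [hu]
    have := (orthonormal_stdBasis.comp _ hu_inj).inner_sum (fun _ => (1:ℂ)) (fun _ => (1:ℂ))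
      (Finset.range (m ^ 2))
    simp only [Function.comp, one_smul, map_one, one_mul, Finset.sum_const,
      Finset.card_range, nsmul_eq_mul, mul_one] at this
    rw [this]
    push_cast
    ring
  have hnormu : ‖u‖ = m := by
    have hsq : ‖u‖ ^ 2 = (m:ℝ)^2 := by
      rw [← inner_self_eq_norm_sq (𝕜 := ℂ) u, huu]
      exact RCLike.ofReal_re _
    rw [← Real.sqrt_sq (norm_nonneg u), hsq, Real.sqrt_sq hm0.le]
  have hrow : ∀ l ∈ Finset.range (m^2), (inner ℂ (stdBasis (2*(l:ℤ)*n+n)) w' : ℂ)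
      = ((2 * R^n : ℝ) : ℂ) := by
    intro l hl
    rw [hw', inner_sum]
    have hstep : ∀ l' ∈ Finset.range (m^2+1),
        (inner ℂ (stdBasis (2*(l:ℤ)*n+n)) (((R^n:ℝ):ℂ) • stdBasis (2*(l':ℤ)*n+n) +
          ((R^n:ℝ):ℂ) • stdBasis (2*(l':ℤ)*n-n)) : ℂ)
        = (if l' = l then ((R^n:ℝ):ℂ) else 0) + (if l' = l+1 then ((R^n:ℝ):ℂ) else 0) := by
      intro l' _
      rw [inner_add_right, inner_smul_right, inner_smul_right, inner_stdBasis, inner_stdBasis]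
      congr 1
      · by_cases h : l' = l
        · subst h; simp
        · rw [if_neg, if_neg h, mul_zero]
          intro hc
          exact h (by exact_mod_cast hcancel l' l (by omega))
      · by_cases h : l' = l + 1
        · subst h
          rw [if_pos, if_pos rfl, mul_one]
          push_cast; ring
        · rw [if_neg, if_neg h, mul_zero]
          intro hc
          have : 2 * (l':ℤ) * n = 2 * ((l:ℤ) + 1) * n := by
            have : 2 * ((l:ℤ) + 1) * n = 2 * (l:ℤ) * n + 2 * n := by ring
            omega
          exact h (by exact_mod_cast hcancel l' ((l:ℤ)+1) this)
    rw [Finset.sum_congr rfl hstep, Finset.sum_add_distrib, Finset.sum_ite_eq',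
      Finset.sum_ite_eq']
    have hmem : l ∈ Finset.range (m^2+1) ∧ l+1 ∈ Finset.range (m^2+1) := by
      simp only [Finset.mem_range] at hl ⊢
      omega
    rw [if_pos hmem.1, if_pos hmem.2]
    push_cast; ring
  have hinner : (inner ℂ u w' : ℂ) = ((2 * m^2 * R^n : ℝ) : ℂ) := by
    rw [hu, sum_inner, Finset.sum_congr rfl hrow, Finset.sum_const, Finset.card_range,
      nsmul_eq_mul]
    push_cast; ring
  have hb := norm_inner_le_norm (𝕜 := ℂ) u w'
  rw [hinner, hnormu] at hb
  have hb2 : 2 * m^2 * R^n ≤ m * ‖w'‖ := by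
    have : ‖((2 * (m:ℝ)^2 * R^n : ℝ) : ℂ)‖ = 2 * m^2 * R^n := by
      rw [Complex.norm_real, Real.norm_of_nonneg (by positivity)]
    linarith [this ▸ hb]
  have hnw : ‖(S ^ n + Sinv ^ n) v‖ = (1/m) * ‖w'‖ := by
    rw [happ, norm_smul]
    congr 1
    simp
  rw [hnw]
  rw [div_mul_eq_mul_div, le_div_iff₀ hm0]
  nlinarith
end

section
/- Fix a real number R > 1 and an integer n ≥ 2. Define β : ℤ → ℝ by β(k) = R^{d(k)} with d(k) = min_{l ∈ ℤ} |k − 2nl|, and let S be the bounded invertible operator on ℓ²(ℤ, ℂ) with S e_k = (β(k+1)/β(k)) e_{k+1} for all k ∈ ℤ. Then the operator norm of S^n + S^{-n} satisfies ‖S^n + S^{-n}‖ ≥ 2 R^n. -/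
lemma distMult_eq (n : ℕ) (hn : 1 ≤ n) (l q : ℤ) (hq : |q| ≤ (n : ℤ)) :
    distMult n (2 * n * l + q) = |q| := by
  unfold distMult
  apply le_antisymm
  · refine csInf_le ⟨0, ?_⟩ ⟨l, ?_⟩
    · rintro _ ⟨m, rfl⟩
      positivity
    · show |2 * (n:ℤ) * l + q - 2 * n * l| = |q|
      ring_nf
  · apply le_csInf (Set.range_nonempty _)
    rintro _ ⟨m, rfl⟩
    show |q| ≤ |2 * (n:ℤ) * l + q - 2 * n * m|
    rcases eq_or_ne m l with rfl | hml
    · simp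
    · have h1 : (1 : ℤ) ≤ |l - m| := by
        rw [← zero_add 1, Int.add_one_le_iff]
        exact abs_pos.mpr (sub_ne_zero.mpr (Ne.symm hml))
      have h2 : 2 * (n : ℤ) * l + q - 2 * n * m = 2 * n * (l - m) + q := by ring
      rw [h2]
      have h3 : |2 * (n : ℤ) * (l - m)| = 2 * n * |l - m| := by
        rw [abs_mul]
        congr 1
        simp [abs_of_nonneg]
      have h4 : |2 * (n : ℤ) * (l - m)| ≤ |2 * n * (l - m) + q| + |q| := by
        calc |2 * (n : ℤ) * (l - m)| = |(2 * n * (l - m) + q) + (-q)| := by ring_nf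
          _ ≤ |2 * (n : ℤ) * (l - m) + q| + |(-q)| := abs_add_le _ _
          _ = _ := by rw [abs_neg]
      have hn' : (1 : ℤ) ≤ n := by exact_mod_cast hn
      nlinarith [abs_nonneg q, abs_nonneg (2 * (n : ℤ) * (l - m) + q)]

lemma weightβ_eq (R : ℝ) (n : ℕ) (hn : 1 ≤ n) (l q : ℤ) (hq : |q| ≤ (n : ℤ)) :
    weightβ R n (2 * n * l + q) = R ^ |q| := by
  unfold weightβ
  rw [distMult_eq n hn l q hq]

/-- Let `S` be the bounded invertible bilateral weighted shift on `ℓ²(ℤ, ℂ)` with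
`S e_k = (β(k+1)/β(k)) e_{k+1}`. Then `‖Sⁿ + S⁻ⁿ‖ ≥ 2 Rⁿ`. -/
theorem weighted_shift_norm_lower_bound (R : ℝ) (hR : 1 < R) (n : ℕ) (hn : 2 ≤ n)
    (S Sinv : ellTwo →L[ℂ] ellTwo)
    (hinv₁ : S ∘L Sinv = 1) (hinv₂ : Sinv ∘L S = 1)
    (hS : ∀ k : ℤ, S (stdBasis k) =
      ((weightβ R n (k + 1) / weightβ R n k : ℝ) : ℂ) • stdBasis (k + 1)) :
    2 * R ^ n ≤ ‖S ^ n + Sinv ^ n‖ := by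
  have hR0 : (0:ℝ) < R := lt_trans one_pos hR
  have hn1 : 1 ≤ n := le_trans one_le_two hn
  have hβpos : ∀ k : ℤ, 0 < weightβ R n k := fun k => zpow_pos hR0 _
  have hβ : ∀ l q : ℤ, |q| ≤ (n : ℤ) → weightβ R n (2 * n * l + q) = R ^ |q| :=
    fun l q hq => weightβ_eq R n hn1 l q hq
  -- value of β at points 2nl + m for 0 ≤ m ≤ n
  have hβ' : ∀ (l : ℤ) (m : ℕ), m ≤ n → weightβ R n (2 * n * l + m) = R ^ (m : ℤ) := by
    intro l m hm
    rw [hβ l m (by rw [abs_of_nonneg (Int.ofNat_nonneg m)]; exact_mod_cast hm),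
      abs_of_nonneg (Int.ofNat_nonneg m)]
  have hβ'' : ∀ (l : ℤ) (m : ℕ), m ≤ n → weightβ R n (2 * n * l - m) = R ^ (m : ℤ) := by
    intro l m hm
    have h1 : 2 * (n:ℤ) * l - m = 2 * n * l + (-(m:ℤ)) := by ring
    rw [h1, hβ l (-(m:ℤ)) (by rw [abs_neg, abs_of_nonneg (Int.ofNat_nonneg m)]; exact_mod_cast hm),
      abs_neg, abs_of_nonneg (Int.ofNat_nonneg m)]
  -- the inverse shift on basis vectors
  have hSinv : ∀ k : ℤ, Sinv (stdBasis (k + 1)) =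
      ((weightβ R n k / weightβ R n (k + 1) : ℝ) : ℂ) • stdBasis k := by
    intro k
    have h1 : Sinv (S (stdBasis k)) = stdBasis k := by
      rw [← ContinuousLinearMap.comp_apply, hinv₂, ContinuousLinearMap.one_apply]
    rw [hS k, map_smul] at h1
    have hc : ((weightβ R n (k + 1) / weightβ R n k : ℝ) : ℂ) ≠ 0 := by
      rw [Complex.ofReal_ne_zero]
      exact ne_of_gt (div_pos (hβpos _) (hβpos _))
    have h2 : ((weightβ R n k / weightβ R n (k + 1) : ℝ) : ℂ) =
        ((weightβ R n (k + 1) / weightβ R n k : ℝ) : ℂ)⁻¹ := by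
      rw [← Complex.ofReal_inv, inv_div]
    rw [h2, eq_inv_smul_iff₀ hc]
    exact h1
  -- powers of S on basis vectors
  have hSpow : ∀ m : ℕ, m ≤ n → ∀ l : ℤ, (S ^ m) (stdBasis (2 * n * l)) =
      ((R ^ m : ℝ) : ℂ) • stdBasis (2 * n * l + m) := by
    intro m
    induction m with
    | zero => intro _ l; simp
    | succ m ih =>
      intro hm l
      rw [pow_succ', ContinuousLinearMap.mul_apply, ih (by omega) l, map_smul, hS,
        smul_smul]
      have e1 : weightβ R n (2 * n * l + (m:ℤ) + 1) / weightβ R n (2 * n * l + m) = R := by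
        have h1 : 2 * (n:ℤ) * l + m + 1 = 2 * n * l + ((m+1 : ℕ) : ℤ) := by push_cast; ring
        rw [h1, hβ' l (m+1) hm, hβ' l m (by omega), ← zpow_sub₀ (ne_of_gt hR0)]
        have : ((m+1:ℕ):ℤ) - (m:ℤ) = 1 := by push_cast; ring
        rw [this, zpow_one]
      rw [e1]
      have e2 : 2 * (n:ℤ) * l + (m:ℤ) + 1 = 2 * n * l + ((m+1 : ℕ) : ℤ) := by push_cast; ring
      rw [e2]
      congr 1
      push_cast
      ring
  -- powers of Sinv on basis vectors
  have hSinvpow : ∀ m : ℕ, m ≤ n → ∀ l : ℤ, (Sinv ^ m) (stdBasis (2 * n * l)) =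
      ((R ^ m : ℝ) : ℂ) • stdBasis (2 * n * l - m) := by
    intro m
    induction m with
    | zero => intro _ l; simp
    | succ m ih =>
      intro hm l
      rw [pow_succ', ContinuousLinearMap.mul_apply, ih (by omega) l, map_smul]
      have h0 : (2 * (n:ℤ) * l - m) = (2 * n * l - ((m+1:ℕ):ℤ)) + 1 := by push_cast; ring
      rw [h0, hSinv, smul_smul]
      have e1 : weightβ R n (2 * n * l - ((m+1:ℕ):ℤ)) /
          weightβ R n (2 * n * l - ((m+1:ℕ):ℤ) + 1) = R := by
        rw [← h0, hβ'' l (m+1) hm, hβ'' l m (by omega), ← zpow_sub₀ (ne_of_gt hR0)]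
        have : ((m+1:ℕ):ℤ) - (m:ℤ) = 1 := by push_cast; ring
        rw [this, zpow_one]
      rw [e1]
      congr 1
      push_cast
      ring
  -- the operator T on basis vectors at multiples of 2n
  set T := S ^ n + Sinv ^ n with hTdef
  have hT : ∀ l : ℤ, T (stdBasis (2 * n * l)) =
      ((R ^ n : ℝ) : ℂ) • (stdBasis (2 * n * l + n) + stdBasis (2 * n * l - n)) := by
    intro l
    rw [hTdef, ContinuousLinearMap.add_apply, hSpow n le_rfl l, hSinvpow n le_rfl l, smul_add]
  have hon := orthonormal_iff_ite.mp orthonormal_stdBasis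
  have h2n : (0:ℤ) < 2 * n := by positivity
  -- key estimate for each N
  have key : ∀ N : ℕ, 2 * (N:ℝ) * R ^ n ≤ ‖T‖ * ((N:ℝ) + 1) := by
    intro N
    set x : ellTwo := ∑ j ∈ Finset.range N, stdBasis (2 * n * (j:ℤ)) with hx
    set y : ellTwo := ∑ i ∈ Finset.range (N+1), stdBasis (2 * n * (i:ℤ) - n) with hy
    have hxx : (inner ℂ x x : ℂ) = (N : ℂ) := by
      rw [hx]
      rw [sum_inner]
      have : ∀ j ∈ Finset.range N,
          (inner ℂ (stdBasis (2 * n * (j:ℤ))) (∑ i ∈ Finset.range N, stdBasis (2 * n * (i:ℤ))) : ℂ) = 1 := by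
        intro j hj
        rw [inner_sum]
        have e : ∀ i ∈ Finset.range N,
            (inner ℂ (stdBasis (2 * n * (j:ℤ))) (stdBasis (2 * n * (i:ℤ))) : ℂ)
              = if j = i then 1 else 0 := by
          intro i _
          rw [hon]
          refine if_congr ?_ rfl rfl
          constructor
          · intro h
            have := mul_left_cancel₀ (ne_of_gt h2n) h
            exact_mod_cast this
          · intro h; rw [h]
        rw [Finset.sum_congr rfl e, Finset.sum_ite_eq]
        simp [hj]
      rw [Finset.sum_congr rfl this]
      simp
    have hyy : (inner ℂ y y : ℂ) = ((N : ℂ) + 1) := by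
      rw [hy]
      rw [sum_inner]
      have : ∀ j ∈ Finset.range (N+1),
          (inner ℂ (stdBasis (2 * n * (j:ℤ) - n))
            (∑ i ∈ Finset.range (N+1), stdBasis (2 * n * (i:ℤ) - n)) : ℂ) = 1 := by
        intro j hj
        rw [inner_sum]
        have e : ∀ i ∈ Finset.range (N+1),
            (inner ℂ (stdBasis (2 * n * (j:ℤ) - n)) (stdBasis (2 * n * (i:ℤ) - n)) : ℂ)
              = if j = i then 1 else 0 := by
          intro i _
          rw [hon]
          refine if_congr ?_ rfl rfl
          constructor
          · intro h
            have h' : 2 * (n:ℤ) * j = 2 * n * i := by omega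
            have := mul_left_cancel₀ (ne_of_gt h2n) h'
            exact_mod_cast this
          · intro h; rw [h]
        rw [Finset.sum_congr rfl e, Finset.sum_ite_eq]
        simp [hj]
      rw [Finset.sum_congr rfl this]
      simp
    have hTxy : (inner ℂ (T x) y : ℂ) = ((2 * (N:ℝ) * R ^ n : ℝ) : ℂ) := by
      rw [hx, map_sum, sum_inner]
      have : ∀ j ∈ Finset.range N,
          (inner ℂ (T (stdBasis (2 * n * (j:ℤ)))) y : ℂ) = ((R ^ n : ℝ) : ℂ) * 2 := by
        intro j hj
        rw [hT, inner_smul_left, inner_add_left, Complex.conj_ofReal]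
        congr 1
        have hs1 : (inner ℂ (stdBasis (2 * n * (j:ℤ) + n)) y : ℂ) = 1 := by
          rw [hy, inner_sum]
          have e : ∀ i ∈ Finset.range (N+1),
              (inner ℂ (stdBasis (2 * n * (j:ℤ) + n)) (stdBasis (2 * n * (i:ℤ) - n)) : ℂ)
                = if j + 1 = i then 1 else 0 := by
            intro i _
            rw [hon]
            refine if_congr ?_ rfl rfl
            constructor
            · intro h
              have h' : 2 * (n:ℤ) * ((j:ℤ) + 1) = 2 * n * i := by push_cast at h ⊢; linarith
              have := mul_left_cancel₀ (ne_of_gt h2n) h'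
              exact_mod_cast this
            · intro h
              have : ((j:ℤ) + 1) = (i:ℤ) := by exact_mod_cast congrArg (Nat.cast : ℕ → ℤ) h
              rw [← this]; ring
          rw [Finset.sum_congr rfl e, Finset.sum_ite_eq]
          have hjN : j + 1 ∈ Finset.range (N+1) := by
            rw [Finset.mem_range] at hj ⊢; omega
          simp [hjN]
        have hs2 : (inner ℂ (stdBasis (2 * n * (j:ℤ) - n)) y : ℂ) = 1 := by
          rw [hy, inner_sum]
          have e : ∀ i ∈ Finset.range (N+1),
              (inner ℂ (stdBasis (2 * n * (j:ℤ) - n)) (stdBasis (2 * n * (i:ℤ) - n)) : ℂ)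
                = if j = i then 1 else 0 := by
            intro i _
            rw [hon]
            refine if_congr ?_ rfl rfl
            constructor
            · intro h
              have h' : 2 * (n:ℤ) * j = 2 * n * i := by omega
              have := mul_left_cancel₀ (ne_of_gt h2n) h'
              exact_mod_cast this
            · intro h; rw [h]
          rw [Finset.sum_congr rfl e, Finset.sum_ite_eq]
          have hjN : j ∈ Finset.range (N+1) := by
            rw [Finset.mem_range] at hj ⊢; omega
          simp [hjN]
        rw [hs1, hs2]
        norm_num
      rw [Finset.sum_congr rfl this]
      rw [Finset.sum_const, Finset.card_range]
      push_cast
      ring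
    -- norms
    have hnx : ‖x‖ = Real.sqrt N := by
      have h := inner_self_eq_norm_sq_to_K (𝕜 := ℂ) x
      rw [hxx] at h
      have hcast : ((N:ℝ):ℂ) = ((‖x‖ ^ 2 : ℝ):ℂ) := by push_cast; exact h
      have h' : (N:ℝ) = ‖x‖ ^ 2 := Complex.ofReal_injective hcast
      rw [h', Real.sqrt_sq (norm_nonneg _)]
    have hny : ‖y‖ = Real.sqrt ((N:ℝ) + 1) := by
      have h := inner_self_eq_norm_sq_to_K (𝕜 := ℂ) y
      rw [hyy] at h
      have hcast : (((N:ℝ) + 1 : ℝ):ℂ) = ((‖y‖ ^ 2 : ℝ):ℂ) := by push_cast; exact h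
      have h' : ((N:ℝ) + 1) = ‖y‖ ^ 2 := Complex.ofReal_injective hcast
      rw [h', Real.sqrt_sq (norm_nonneg _)]
    have hcs : ‖(inner ℂ (T x) y : ℂ)‖ ≤ ‖T x‖ * ‖y‖ := norm_inner_le_norm _ _
    have hTx : ‖T x‖ ≤ ‖T‖ * ‖x‖ := T.le_opNorm x
    have hval : ‖(inner ℂ (T x) y : ℂ)‖ = 2 * (N:ℝ) * R ^ n := by
      rw [hTxy, Complex.norm_real, Real.norm_eq_abs, abs_of_nonneg (by positivity)]
    have hchain : 2 * (N:ℝ) * R ^ n ≤ ‖T‖ * (Real.sqrt N * Real.sqrt ((N:ℝ) + 1)) := by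
      calc 2 * (N:ℝ) * R ^ n = ‖(inner ℂ (T x) y : ℂ)‖ := hval.symm
        _ ≤ ‖T x‖ * ‖y‖ := hcs
        _ ≤ (‖T‖ * ‖x‖) * ‖y‖ := by
            apply mul_le_mul_of_nonneg_right hTx (norm_nonneg _)
        _ = ‖T‖ * (Real.sqrt N * Real.sqrt ((N:ℝ) + 1)) := by rw [hnx, hny]; ring
    refine le_trans hchain ?_
    apply mul_le_mul_of_nonneg_left _ (norm_nonneg _)
    calc Real.sqrt N * Real.sqrt ((N:ℝ) + 1)
        ≤ Real.sqrt ((N:ℝ) + 1) * Real.sqrt ((N:ℝ) + 1) := by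
          apply mul_le_mul_of_nonneg_right _ (Real.sqrt_nonneg _)
          exact Real.sqrt_le_sqrt (by linarith)
      _ = (N:ℝ) + 1 := Real.mul_self_sqrt (by positivity)
  -- conclude by taking N → ∞
  by_contra hcon
  push_neg at hcon
  set c := ‖T‖ with hc
  have hc0 : 0 ≤ c := norm_nonneg _
  have hε : 0 < 2 * R ^ n - c := by linarith
  obtain ⟨N, hN⟩ := exists_nat_gt (c / (2 * R ^ n - c))
  have h1 := key N
  have h2 : c < (N:ℝ) * (2 * R ^ n - c) := by
    rw [div_lt_iff₀ hε] at hN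
    exact hN
  nlinarith
end

section
/- For every real number R > 1 and every integer n ≥ 2, there exist a complex Hilbert space H and a bounded invertible linear operator T on H with ‖T‖ ≤ R and ‖T^{-1}‖ ≤ R such that ‖T^n + T^{-n}‖ ≥ (2R^n / (R^n + R^{-n})) · sup_{z ∈ A_R} |z^n + z^{-n}|; equivalently, ‖T^n + T^{-n}‖ ≥ 2R^n while sup_{z ∈ A_R} |z^n + z^{-n}| = R^n + R^{-n}. Consequently, any constant K such that A_R is a K-spectral set for all invertible T with ‖T‖ ≤ R and ‖T^{-1}‖ ≤ R must satisfy K ≥ 2R^n/(R^n + R^{-n}). -/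
/-- The closed annulus `A_R = {z : 1/R ≤ |z| ≤ R}`. -/
def annulus (R : ℝ) : Set ℂ := {z : ℂ | 1 / R ≤ ‖z‖ ∧ ‖z‖ ≤ R}

/-- Integer powers of an invertible operator `T` with given inverse `Tinv`:
`T^j` for `j ≥ 0` and `(T⁻¹)^{-j}` for `j < 0`. -/
noncomputable def opZpow {H : Type*} [NormedAddCommGroup H] [InnerProductSpace ℂ H]
    (T Tinv : H →L[ℂ] H) (j : ℤ) : H →L[ℂ] H :=
  if 0 ≤ j then T ^ j.toNat else Tinv ^ (-j).toNat

open Finset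

noncomputable def twOp (m : ℕ) [NeZero m] (w : ZMod m → ℂ) (σ : ZMod m ≃ ZMod m) :
    EuclideanSpace ℂ (ZMod m) →L[ℂ] EuclideanSpace ℂ (ZMod m) :=
  LinearMap.toContinuousLinearMap
  { toFun := fun x => WithLp.toLp 2 (fun i => w i * x (σ i))
    map_add' := by intro x y; ext i; simp [mul_add]
    map_smul' := by intro c x; ext i; simp; ring }

lemma twOp_apply (m : ℕ) [NeZero m] (w : ZMod m → ℂ) (σ : ZMod m ≃ ZMod m)
    (x : EuclideanSpace ℂ (ZMod m)) (i : ZMod m) :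
    twOp m w σ x i = w i * x (σ i) := rfl

lemma twOp_norm_le (m : ℕ) [NeZero m] (w : ZMod m → ℂ) (σ : ZMod m ≃ ZMod m)
    (c : ℝ) (hc : 0 ≤ c) (hw : ∀ i, ‖w i‖ ≤ c) : ‖twOp m w σ‖ ≤ c := by
  apply ContinuousLinearMap.opNorm_le_bound _ hc
  intro x
  rw [EuclideanSpace.norm_eq, EuclideanSpace.norm_eq]
  have h1 : c * Real.sqrt (∑ i, ‖x i‖ ^ 2) = Real.sqrt (c ^ 2 * ∑ i, ‖x i‖ ^ 2) := by
    rw [Real.sqrt_mul (by positivity), Real.sqrt_sq hc]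
  rw [h1]
  apply Real.sqrt_le_sqrt
  rw [Finset.mul_sum]
  have h2 : ∑ i : ZMod m, c ^ 2 * ‖x i‖ ^ 2 = ∑ i : ZMod m, c ^ 2 * ‖x (σ i)‖ ^ 2 :=
    (Equiv.sum_comp σ (fun j => c ^ 2 * ‖x j‖ ^ 2)).symm
  rw [h2]
  apply Finset.sum_le_sum
  intro i _
  rw [twOp_apply, norm_mul, mul_pow]
  exact mul_le_mul_of_nonneg_right (pow_le_pow_left₀ (norm_nonneg _) (hw i) 2)
    (by positivity)

lemma twOp_single (m : ℕ) [NeZero m] (w : ZMod m → ℂ) (σ : ZMod m ≃ ZMod m)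
    (j : ZMod m) (a : ℂ) :
    twOp m w σ (EuclideanSpace.single j a) =
      EuclideanSpace.single (σ.symm j) (w (σ.symm j) * a) := by
  ext i
  rw [twOp_apply]
  simp only [EuclideanSpace.single_apply]
  by_cases h : i = σ.symm j
  · subst h; simp
  · rw [if_neg h, if_neg (by rwa [Equiv.apply_eq_iff_eq_symm_apply]), mul_zero]

section Construct

variable (R : ℝ) (n : ℕ)

/-- weight: `R` on residues `1..n`, `R⁻¹` elsewhere (in `ZMod (2n)`). -/
noncomputable def wgt (i : ZMod (2 * n)) : ℂ :=
  if 1 ≤ i.val ∧ i.val ≤ n then (R : ℂ) else (R : ℂ)⁻¹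

theorem exists_op (hR : 1 < R) (hn : 2 ≤ n) :
    ∃ (H : Type) (_ : NormedAddCommGroup H) (_ : InnerProductSpace ℂ H) (_ : CompleteSpace H)
        (T Tinv : H →L[ℂ] H),
      T ∘L Tinv = 1 ∧ Tinv ∘L T = 1 ∧ ‖T‖ ≤ R ∧ ‖Tinv‖ ≤ R ∧
      2 * R ^ n ≤ ‖T ^ n + Tinv ^ n‖ := by
  haveI : NeZero (2 * n) := ⟨by omega⟩
  have hR0 : (0:ℝ) < R := by linarith
  have hRinvle : R⁻¹ ≤ R := by nlinarith [mul_inv_cancel₀ hR0.ne']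
  have hRC : (R : ℂ) ≠ 0 := by exact_mod_cast hR0.ne'
  set w : ZMod (2 * n) → ℂ := wgt R n with hw
  have hwne : ∀ i, w i ≠ 0 := by
    intro i; rw [hw, wgt]; split
    · exact hRC
    · exact inv_ne_zero hRC
  have habsR : ‖(R : ℂ)‖ = R := by rw [Complex.norm_real, Real.norm_eq_abs, abs_of_pos hR0]
  have hwabs : ∀ i, ‖w i‖ ≤ R := by
    intro i; rw [hw, wgt]; split
    · rw [habsR]
    · rw [norm_inv, habsR]; exact hRinvle
  have hwabs' : ∀ i, ‖(w i)⁻¹‖ ≤ R := by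
    intro i; rw [hw, wgt]; split
    · rw [norm_inv, habsR]; exact hRinvle
    · rw [inv_inv, habsR]
  -- the operators
  set σ : ZMod (2 * n) ≃ ZMod (2 * n) := Equiv.subRight 1 with hσ
  set T : EuclideanSpace ℂ (ZMod (2 * n)) →L[ℂ] EuclideanSpace ℂ (ZMod (2 * n)) :=
    twOp (2 * n) w σ with hT
  set Tinv : EuclideanSpace ℂ (ZMod (2 * n)) →L[ℂ] EuclideanSpace ℂ (ZMod (2 * n)) :=
    twOp (2 * n) (fun i => (w (i + 1))⁻¹) (Equiv.addRight 1) with hTi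
  have hσ1 : ∀ i : ZMod (2 * n), σ i = i - 1 := fun i => rfl
  have hcomp1 : T ∘L Tinv = 1 := by
    apply ContinuousLinearMap.ext; intro x; ext i
    show w i * ((w (i - 1 + 1))⁻¹ * x (i - 1 + 1)) = x i
    rw [sub_add_cancel, ← mul_assoc, mul_inv_cancel₀ (hwne i), one_mul]
  have hcomp2 : Tinv ∘L T = 1 := by
    apply ContinuousLinearMap.ext; intro x; ext i
    show (w (i + 1))⁻¹ * (w (i + 1) * x (i + 1 - 1)) = x i
    rw [add_sub_cancel_right, ← mul_assoc, inv_mul_cancel₀ (hwne _), one_mul]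
  have hTn : ‖T‖ ≤ R := twOp_norm_le _ _ _ R hR0.le hwabs
  have hTin : ‖Tinv‖ ≤ R := twOp_norm_le _ _ _ R hR0.le (fun i => hwabs' _)
  -- action of powers on basis vectors
  have hTsingle : ∀ (j : ZMod (2 * n)) (a : ℂ),
      T (EuclideanSpace.single j a) = EuclideanSpace.single (j + 1) (w (j + 1) * a) := by
    intro j a
    rw [hT, twOp_single]
    rfl
  have hTisingle : ∀ (j : ZMod (2 * n)) (a : ℂ),
      Tinv (EuclideanSpace.single j a) = EuclideanSpace.single (j - 1) ((w j)⁻¹ * a) := by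
    intro j a
    rw [hTi, twOp_single]
    have h1 : (Equiv.addRight (1 : ZMod (2 * n))).symm j = j - 1 := by
      simp [Equiv.symm_apply_eq, sub_eq_add_neg]
    rw [h1, sub_add_cancel]
  -- w on the relevant indices
  have hwval : ∀ k : ℕ, 1 ≤ k → k ≤ n → w (k : ZMod (2 * n)) = (R : ℂ) := by
    intro k h1 h2
    have hv : ((k : ZMod (2 * n))).val = k := by
      rw [ZMod.val_natCast, Nat.mod_eq_of_lt (by omega)]
    rw [hw, wgt, hv, if_pos ⟨h1, h2⟩]
  have hwvalneg : ∀ k : ℕ, k ≤ n - 1 → w (-(k : ZMod (2 * n))) = (R : ℂ)⁻¹ := by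
    intro k hk
    rcases Nat.eq_zero_or_pos k with h0 | h0
    · subst h0
      have hv0 : ((-(0:ℕ) : ZMod (2 * n))).val = 0 := by simp
      rw [hw, wgt, hv0]
      norm_num
    have hkey : (-(k : ZMod (2 * n))) = ((2 * n - k : ℕ) : ZMod (2 * n)) := by
      have h2 : ((2 * n - k : ℕ) : ZMod (2 * n)) + (k : ZMod (2 * n)) = 0 := by
        rw [← Nat.cast_add, Nat.sub_add_cancel (by omega), ZMod.natCast_self]
      exact neg_eq_of_add_eq_zero_left h2
    have hv : ((2 * n - k : ℕ) : ZMod (2 * n)).val = 2 * n - k := by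
      rw [ZMod.val_natCast, Nat.mod_eq_of_lt (by omega)]
    rw [hkey, hw, wgt, hv, if_neg (by omega)]
  -- powers acting on basis vectors
  have hTpow : ∀ k : ℕ, k ≤ n → (T ^ k) (EuclideanSpace.single (0 : ZMod (2 * n)) 1) =
      EuclideanSpace.single ((k : ℕ) : ZMod (2 * n)) ((R : ℂ) ^ k) := by
    intro k hk
    induction k with
    | zero => simp
    | succ k ih =>
      rw [pow_succ', ContinuousLinearMap.mul_apply, ih (by omega), hTsingle]
      have hcast : ((k : ℕ) : ZMod (2 * n)) + 1 = ((k + 1 : ℕ) : ZMod (2 * n)) := by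
        push_cast; ring
      rw [hcast, hwval (k + 1) (by omega) (by omega), pow_succ]
      ring_nf
  have hTipow : ∀ k : ℕ, k ≤ n → (Tinv ^ k) (EuclideanSpace.single (0 : ZMod (2 * n)) 1) =
      EuclideanSpace.single (-((k : ℕ) : ZMod (2 * n))) ((R : ℂ) ^ k) := by
    intro k hk
    induction k with
    | zero => simp
    | succ k ih =>
      rw [pow_succ', ContinuousLinearMap.mul_apply, ih (by omega), hTisingle]
      rw [hwvalneg k (by omega), inv_inv]
      have hcast : -((k : ℕ) : ZMod (2 * n)) - 1 = -(((k + 1 : ℕ)) : ZMod (2 * n)) := by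
        push_cast; ring
      rw [hcast, pow_succ]
      ring_nf
  -- evaluate the sum on e₀
  have hnegn : -((n : ℕ) : ZMod (2 * n)) = ((n : ℕ) : ZMod (2 * n)) := by
    have h2 : ((n : ℕ) : ZMod (2 * n)) + ((n : ℕ) : ZMod (2 * n)) = 0 := by
      rw [← Nat.cast_add, show n + n = 2 * n by ring, ZMod.natCast_self]
    exact neg_eq_of_add_eq_zero_right h2
  have heval : (T ^ n + Tinv ^ n) (EuclideanSpace.single (0 : ZMod (2 * n)) 1) =
      EuclideanSpace.single ((n : ℕ) : ZMod (2 * n)) (2 * (R : ℂ) ^ n) := by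
    rw [ContinuousLinearMap.add_apply, hTpow n le_rfl, hTipow n le_rfl, hnegn]
    ext i
    simp only [PiLp.add_apply, EuclideanSpace.single_apply]
    split <;> ring
  have hnorm1 : ‖EuclideanSpace.single (0 : ZMod (2 * n)) (1 : ℂ)‖ = 1 := by
    rw [EuclideanSpace.norm_single]; norm_num
  have hlow : 2 * R ^ n ≤ ‖T ^ n + Tinv ^ n‖ := by
    have h1 := (T ^ n + Tinv ^ n).le_opNorm (EuclideanSpace.single (0 : ZMod (2 * n)) 1)
    rw [heval, hnorm1, mul_one, EuclideanSpace.norm_single] at h1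
    refine le_trans (le_of_eq ?_) h1
    rw [norm_mul]
    have : ‖(R : ℂ) ^ n‖ = R ^ n := by
      rw [norm_pow, Complex.norm_real, Real.norm_of_nonneg hR0.le]
    rw [this]
    norm_num
  exact ⟨EuclideanSpace ℂ (ZMod (2 * n)), inferInstance, inferInstance, inferInstance,
    T, Tinv, hcomp1, hcomp2, hTn, hTin, hlow⟩

end Construct

lemma sup_annulus (R : ℝ) (hR : 1 < R) (n : ℕ) (hn : 2 ≤ n) :
    IsGreatest ((fun z : ℂ => ‖z ^ n + z⁻¹ ^ n‖) '' annulus R)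
      (R ^ n + R⁻¹ ^ n) := by
  have hR0 : (0:ℝ) < R := by linarith
  constructor
  · refine ⟨(R : ℂ), ⟨?_, ?_⟩, ?_⟩
    · rw [Complex.norm_real, Real.norm_eq_abs, abs_of_pos hR0]
      rw [div_le_iff₀ hR0]
      nlinarith
    · rw [Complex.norm_real, Real.norm_eq_abs, abs_of_pos hR0]
    · have : ((R : ℂ)) ^ n + ((R : ℂ))⁻¹ ^ n = ((R ^ n + R⁻¹ ^ n : ℝ) : ℂ) := by
        push_cast; ring
      show ‖(R:ℂ) ^ n + ((R:ℂ))⁻¹ ^ n‖ = R ^ n + R⁻¹ ^ n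
      rw [this, Complex.norm_real, Real.norm_eq_abs, abs_of_pos (by positivity)]
  · rintro y ⟨z, ⟨hz1, hz2⟩, rfl⟩
    simp only
    have ht0 : 0 < ‖z‖ := lt_of_lt_of_le (by positivity) hz1
    set t : ℝ := ‖z‖ with htdef
    have h1 : ‖z ^ n + z⁻¹ ^ n‖ ≤ t ^ n + t⁻¹ ^ n := by
      refine le_trans (norm_add_le _ _) ?_
      rw [norm_pow, norm_pow, norm_inv]
    refine le_trans h1 ?_
    -- now a real inequality
    set a : ℝ := t ^ n with hadef
    have ha0 : 0 < a := by positivity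
    have haU : a ≤ R ^ n := pow_le_pow_left₀ ht0.le hz2 n
    have haL : R⁻¹ ^ n ≤ a := by
      apply pow_le_pow_left₀ (by positivity)
      rw [← one_div]
      exact hz1
    have hainv : t⁻¹ ^ n = a⁻¹ := by rw [hadef, ← inv_pow]
    rw [hainv]
    have hRn0 : (0:ℝ) < R ^ n := by positivity
    have hprod : R ^ n * R⁻¹ ^ n = 1 := by
      rw [← mul_pow, mul_inv_cancel₀ hR0.ne', one_pow]
    have hkey : 0 ≤ (R ^ n - a) * (a - R⁻¹ ^ n) :=
      mul_nonneg (by linarith) (by linarith)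
    rw [← sub_nonneg]
    have hexp : R ^ n + R⁻¹ ^ n - (a + a⁻¹) =
        ((R ^ n - a) * (a - R⁻¹ ^ n)) / a := by
      field_simp
      simp only [one_div]
      nlinarith [hprod]
    rw [hexp]
    positivity


/-- For `R > 1` and `n ≥ 2`: the sup of `|zⁿ + z⁻ⁿ|` over `A_R` equals `Rⁿ + R⁻ⁿ`
(and is attained); there is a Hilbert space `H` and an invertible `T` with
`‖T‖ ≤ R`, `‖T⁻¹‖ ≤ R` and `‖Tⁿ + T⁻ⁿ‖ ≥ 2Rⁿ`; consequently, any constant `K`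
such that `A_R` is `K`-spectral (tested on Laurent polynomials) for all such `T`
satisfies `K ≥ 2Rⁿ/(Rⁿ + R⁻ⁿ)`. -/
theorem annulus_spectral_constant_lower_bound_n (R : ℝ) (hR : 1 < R) (n : ℕ) (hn : 2 ≤ n) :
    IsGreatest ((fun z : ℂ => ‖z ^ n + z⁻¹ ^ n‖) '' annulus R)
      (R ^ n + R⁻¹ ^ n) ∧
    (∃ (H : Type) (_ : NormedAddCommGroup H) (_ : InnerProductSpace ℂ H) (_ : CompleteSpace H)
        (T Tinv : H →L[ℂ] H),
      T ∘L Tinv = 1 ∧ Tinv ∘L T = 1 ∧ ‖T‖ ≤ R ∧ ‖Tinv‖ ≤ R ∧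
      2 * R ^ n ≤ ‖T ^ n + Tinv ^ n‖) ∧
    ∀ K : ℝ,
      (∀ (H : Type) [NormedAddCommGroup H] [InnerProductSpace ℂ H] [CompleteSpace H]
          (T Tinv : H →L[ℂ] H), T ∘L Tinv = 1 → Tinv ∘L T = 1 → ‖T‖ ≤ R → ‖Tinv‖ ≤ R →
        ∀ (N : ℕ) (a : ℤ → ℂ),
          ‖∑ j ∈ Finset.Icc (-(N : ℤ)) (N : ℤ), a j • opZpow T Tinv j‖ ≤
            K * sSup ((fun z : ℂ =>
              ‖∑ j ∈ Finset.Icc (-(N : ℤ)) (N : ℤ), a j * z ^ j‖) '' annulus R)) →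
      2 * R ^ n / (R ^ n + R⁻¹ ^ n) ≤ K := by
  have hR0 : (0:ℝ) < R := by linarith
  have hgreat := sup_annulus R hR n hn
  refine ⟨hgreat, exists_op R n hR hn, ?_⟩
  intro K hK
  obtain ⟨H, i1, i2, i3, T, Tinv, hc1, hc2, hTn, hTin, hlow⟩ := exists_op R n hR hn
  -- the Laurent coefficients
  set a : ℤ → ℂ := fun j => if j = (n : ℤ) ∨ j = -(n : ℤ) then 1 else 0 with ha
  have hmem1 : (n : ℤ) ∈ Finset.Icc (-(n : ℤ)) (n : ℤ) := by
    simp only [Finset.mem_Icc]; omega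
  have hmem2 : (-(n : ℤ)) ∈ Finset.Icc (-(n : ℤ)) (n : ℤ) := by
    simp only [Finset.mem_Icc]; omega
  have hnne : (n : ℤ) ≠ -(n : ℤ) := by omega
  -- a general sum computation
  have hsum : ∀ {M : Type} [AddCommMonoid M] [Module ℂ M] (F : ℤ → M),
      ∑ j ∈ Finset.Icc (-(n : ℤ)) (n : ℤ), a j • F j = F (n : ℤ) + F (-(n : ℤ)) := by
    intro M _ _ F
    have hsplit : ∀ j ∈ Finset.Icc (-(n : ℤ)) (n : ℤ), a j • F j =
        (if j = (n : ℤ) then F j else 0) + (if j = -(n : ℤ) then F j else 0) := by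
      intro j _
      by_cases h1 : j = (n : ℤ) <;> by_cases h2 : j = -(n : ℤ)
      · exact absurd (h1 ▸ h2) hnne
      · simp [ha, h1, h2, hnne, Ne.symm hnne]
      · simp [ha, h1, h2, hnne, Ne.symm hnne]
      · simp [ha, h1, h2, hnne, Ne.symm hnne]
    rw [Finset.sum_congr rfl hsplit, Finset.sum_add_distrib,
      Finset.sum_ite_eq' _ _ F, Finset.sum_ite_eq' _ _ F, if_pos hmem1, if_pos hmem2]
  -- the operator side
  have hopsum : ∑ j ∈ Finset.Icc (-(n : ℤ)) (n : ℤ), a j • opZpow T Tinv j =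
      T ^ n + Tinv ^ n := by
    rw [hsum]
    have h1 : opZpow T Tinv (n : ℤ) = T ^ n := by
      rw [opZpow, if_pos (by positivity), Int.toNat_natCast]
    have h2 : opZpow T Tinv (-(n : ℤ)) = Tinv ^ n := by
      rw [opZpow, if_neg (by omega), neg_neg, Int.toNat_natCast]
    rw [h1, h2]
  -- the function side
  have hfun : ∀ z ∈ annulus R,
      ‖∑ j ∈ Finset.Icc (-(n : ℤ)) (n : ℤ), a j * z ^ j‖ =
        ‖z ^ n + z⁻¹ ^ n‖ := by
    intro z _
    have h1 : ∑ j ∈ Finset.Icc (-(n : ℤ)) (n : ℤ), a j * z ^ j =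
        z ^ (n : ℤ) + z ^ (-(n : ℤ)) := by
      have := hsum (M := ℂ) (fun j => z ^ j)
      simpa [smul_eq_mul] using this
    rw [h1, zpow_neg, zpow_natCast, ← inv_pow]
  have himg : (fun z : ℂ =>
        ‖∑ j ∈ Finset.Icc (-(n : ℤ)) (n : ℤ), a j * z ^ j‖) '' annulus R =
      (fun z : ℂ => ‖z ^ n + z⁻¹ ^ n‖) '' annulus R :=
    Set.image_congr hfun
  have hsSup : sSup ((fun z : ℂ =>
        ‖∑ j ∈ Finset.Icc (-(n : ℤ)) (n : ℤ), a j * z ^ j‖) '' annulus R) =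
      R ^ n + R⁻¹ ^ n := by
    rw [himg]
    exact hgreat.csSup_eq
  have hineq := hK H T Tinv hc1 hc2 hTn hTin n a
  rw [hopsum, hsSup] at hineq
  have hden : (0:ℝ) < R ^ n + R⁻¹ ^ n := by positivity
  rw [div_le_iff₀ hden]
  linarith
end

section
/- Let R > 1 be a real number and let K be a real number with the following property: for every complex Hilbert space H, every bounded invertible linear operator T on H with ‖T‖ ≤ R and ‖T^{-1}‖ ≤ R, and every Laurent polynomial f(z) = Σ_{j=-N}^{N} a_j z^j (a_j ∈ ℂ, N ∈ ℕ), one has ‖f(T)‖ ≤ K · sup_{z ∈ A_R} |f(z)|, where f(T) = Σ_{j=-N}^{N} a_j T^j with T^{-j} = (T^{-1})^j. Then K ≥ 2. In particular, the smallest constant K(R) such that the annulus A_R is a K(R)-spectral set for every bounded invertible operator T with ‖T‖ ≤ R and ‖T^{-1}‖ ≤ R satisfies K(R) ≥ 2 for all R > 1. -/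
/-! ### Auxiliary constructions: a cyclic weighted shift on `ℂ^{2n}` -/

noncomputable def wt (R : ℝ) (n : ℕ) (k : ZMod (2*n)) : ℂ :=
  if k.val < n then (R:ℂ) else (R:ℂ)⁻¹

lemma wt_ne_zero (R : ℝ) (hR : 1 < R) (n : ℕ) (k : ZMod (2*n)) : wt R n k ≠ 0 := by
  have : (R:ℂ) ≠ 0 := by
    simp only [ne_eq, Complex.ofReal_eq_zero]; linarith
  unfold wt; split <;> simp [this]

lemma inv_le_self_of_one_lt' {R : ℝ} (hR : 1 < R) : R⁻¹ ≤ R := by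
  have h0 : (0:ℝ) < R := by linarith
  have : R⁻¹ ≤ 1 := by rw [inv_le_one_iff₀]; right; linarith
  linarith

lemma norm_wt_le (R : ℝ) (hR : 1 < R) (n : ℕ) (k : ZMod (2*n)) : ‖wt R n k‖ ≤ R := by
  have h0 : (0:ℝ) < R := by linarith
  unfold wt; split
  · simp [Complex.norm_real, abs_of_pos h0]
  · rw [norm_inv]
    simp only [Complex.norm_real, Real.norm_eq_abs, abs_of_pos h0]
    exact inv_le_self_of_one_lt' hR

lemma norm_wt_inv_le (R : ℝ) (hR : 1 < R) (n : ℕ) (k : ZMod (2*n)) : ‖(wt R n k)⁻¹‖ ≤ R := by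
  have h0 : (0:ℝ) < R := by linarith
  rw [norm_inv]
  unfold wt; split
  · simp only [Complex.norm_real, Real.norm_eq_abs, abs_of_pos h0]
    exact inv_le_self_of_one_lt' hR
  · rw [norm_inv, inv_inv]
    simp [Complex.norm_real, abs_of_pos h0]

noncomputable def Tmap (R : ℝ) (n : ℕ) [NeZero (2*n)] :
    EuclideanSpace ℂ (ZMod (2*n)) →L[ℂ] EuclideanSpace ℂ (ZMod (2*n)) :=
  LinearMap.toContinuousLinearMap
  { toFun := fun x => WithLp.toLp 2 (fun k => wt R n (k-1) * x (k-1))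
    map_add' := fun x y => by ext k; simp [mul_add]
    map_smul' := fun c x => by ext k; simp; ring }

noncomputable def Tinvmap (R : ℝ) (n : ℕ) [NeZero (2*n)] :
    EuclideanSpace ℂ (ZMod (2*n)) →L[ℂ] EuclideanSpace ℂ (ZMod (2*n)) :=
  LinearMap.toContinuousLinearMap
  { toFun := fun x => WithLp.toLp 2 (fun k => (wt R n k)⁻¹ * x (k+1))
    map_add' := fun x y => by ext k; simp [mul_add]
    map_smul' := fun c x => by ext k; simp; ring }

lemma Tmap_apply (R : ℝ) (n : ℕ) [NeZero (2*n)] (x : EuclideanSpace ℂ (ZMod (2*n)))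
    (k : ZMod (2*n)) : Tmap R n x k = wt R n (k-1) * x (k-1) := rfl

lemma Tinvmap_apply (R : ℝ) (n : ℕ) [NeZero (2*n)] (x : EuclideanSpace ℂ (ZMod (2*n)))
    (k : ZMod (2*n)) : Tinvmap R n x k = (wt R n k)⁻¹ * x (k+1) := rfl

lemma Tmap_single (R : ℝ) (n : ℕ) [NeZero (2*n)] (m : ZMod (2*n)) (c : ℂ) :
    Tmap R n (EuclideanSpace.single m c) = EuclideanSpace.single (m+1) (wt R n m * c) := by
  ext k
  rw [Tmap_apply, EuclideanSpace.single_apply, EuclideanSpace.single_apply]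
  by_cases h : k = m + 1
  · have h' : k - 1 = m := by rw [h]; ring
    simp [h, h']
  · have h' : k - 1 ≠ m := by
      intro hc; apply h; rw [← hc]; ring
    simp [h, h']

lemma Tinvmap_single (R : ℝ) (n : ℕ) [NeZero (2*n)] (m : ZMod (2*n)) (c : ℂ) :
    Tinvmap R n (EuclideanSpace.single m c)
      = EuclideanSpace.single (m-1) ((wt R n (m-1))⁻¹ * c) := by
  ext k
  rw [Tinvmap_apply, EuclideanSpace.single_apply, EuclideanSpace.single_apply]
  by_cases h : k = m - 1
  · have h' : k + 1 = m := by rw [h]; ring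
    simp [h, h']
  · have h' : k + 1 ≠ m := by
      intro hc; apply h; rw [← hc]; ring
    simp [h, h']

lemma Tmap_comp_Tinvmap (R : ℝ) (hR : 1 < R) (n : ℕ) [NeZero (2*n)] :
    Tmap R n ∘L Tinvmap R n = 1 := by
  ext x k
  rw [ContinuousLinearMap.comp_apply, Tmap_apply, Tinvmap_apply]
  rw [sub_add_cancel, mul_inv_cancel_left₀ (wt_ne_zero R hR n _)]
  simp

lemma Tinvmap_comp_Tmap (R : ℝ) (hR : 1 < R) (n : ℕ) [NeZero (2*n)] :
    Tinvmap R n ∘L Tmap R n = 1 := by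
  ext x k
  rw [ContinuousLinearMap.comp_apply, Tinvmap_apply, Tmap_apply]
  rw [add_sub_cancel_right, inv_mul_cancel_left₀ (wt_ne_zero R hR n _)]
  simp

lemma norm_twist_le {ι : Type*} [Fintype ι] [DecidableEq ι] (R : ℝ) (hR0 : 0 ≤ R)
    (c : ι → ℂ) (hc : ∀ k, ‖c k‖ ≤ R) (σ : Equiv.Perm ι)
    (A : EuclideanSpace ℂ ι →L[ℂ] EuclideanSpace ℂ ι)
    (hA : ∀ x k, A x k = c k * x (σ k)) : ‖A‖ ≤ R := by
  refine ContinuousLinearMap.opNorm_le_bound A hR0 (fun x => ?_)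
  rw [EuclideanSpace.norm_eq, EuclideanSpace.norm_eq]
  rw [← Real.sqrt_sq hR0, ← Real.sqrt_mul (by positivity)]
  refine Real.sqrt_le_sqrt ?_
  rw [Finset.mul_sum]
  have hre := Fintype.sum_equiv σ (fun k => ‖x (σ k)‖^2) (fun k => ‖x k‖^2) (fun k => rfl)
  calc ∑ k, ‖A x k‖^2 ≤ ∑ k, R^2 * ‖x (σ k)‖^2 := by
        refine Finset.sum_le_sum (fun k _ => ?_)
        rw [hA, norm_mul, mul_pow]
        have h1 : ‖c k‖^2 ≤ R^2 := by
          apply pow_le_pow_left₀ (norm_nonneg _) (hc k)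
        nlinarith [sq_nonneg (‖x (σ k)‖), norm_nonneg (x (σ k))]
    _ = R^2 * ∑ k, ‖x (σ k)‖^2 := by rw [Finset.mul_sum]
    _ = ∑ k, R^2 * ‖x k‖^2 := by rw [hre, Finset.mul_sum]

lemma norm_Tmap_le (R : ℝ) (hR : 1 < R) (n : ℕ) [NeZero (2*n)] : ‖Tmap R n‖ ≤ R :=
  norm_twist_le R (by linarith) (fun k => wt R n (k-1)) (fun k => norm_wt_le R hR n _)
    (Equiv.subRight (1 : ZMod (2*n))) (Tmap R n)
    (fun x k => by rw [Tmap_apply, Equiv.subRight_apply])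

lemma norm_Tinvmap_le (R : ℝ) (hR : 1 < R) (n : ℕ) [NeZero (2*n)] : ‖Tinvmap R n‖ ≤ R :=
  norm_twist_le R (by linarith) (fun k => (wt R n k)⁻¹) (fun k => norm_wt_inv_le R hR n _)
    (Equiv.addRight (1 : ZMod (2*n))) (Tinvmap R n)
    (fun x k => by rw [Tinvmap_apply, Equiv.coe_addRight])

lemma T_pow_single (R : ℝ) (n : ℕ) [NeZero (2*n)] (hn : 0 < n) :
    ∀ j, j ≤ n → ((Tmap R n)^j) (EuclideanSpace.single (0 : ZMod (2*n)) (1:ℂ))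
      = EuclideanSpace.single ((j : ZMod (2*n))) ((R:ℂ)^j) := by
  intro j
  induction j with
  | zero => intro _; simp
  | succ j ih =>
    intro hj
    have hj' : j ≤ n := by omega
    rw [pow_succ', ContinuousLinearMap.mul_apply, ih hj', Tmap_single]
    have hw : wt R n ((j : ZMod (2*n))) = (R:ℂ) := by
      unfold wt
      rw [ZMod.val_natCast_of_lt (by omega : j < 2*n)]
      rw [if_pos (by omega : j < n)]
    have h2 : ((j:ZMod (2*n)) + 1) = ((j+1 : ℕ) : ZMod (2*n)) := by push_cast; ring
    rw [hw, h2]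
    ring_nf

lemma Tinv_pow_single (R : ℝ) (n : ℕ) [NeZero (2*n)] (hn : 0 < n) :
    ∀ j, j ≤ n → ((Tinvmap R n)^j) (EuclideanSpace.single (0 : ZMod (2*n)) (1:ℂ))
      = EuclideanSpace.single (-(j : ZMod (2*n))) ((R:ℂ)^j) := by
  intro j
  induction j with
  | zero => intro _; simp
  | succ j ih =>
    intro hj
    have hj' : j ≤ n := by omega
    rw [pow_succ', ContinuousLinearMap.mul_apply, ih hj', Tinvmap_single]
    have hcast : (-(j : ZMod (2*n)) - 1) = -((j+1 : ℕ) : ZMod (2*n)) := by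
      push_cast; ring
    have hval : ((-((j+1 : ℕ) : ZMod (2*n))).val) = 2*n - (j+1) := by
      have h1 : (-((j+1 : ℕ) : ZMod (2*n))) = ((2*n - (j+1) : ℕ) : ZMod (2*n)) := by
        have h2 : ((2*n : ℕ) : ZMod (2*n)) = 0 := ZMod.natCast_self _
        rw [Nat.cast_sub (by omega : j+1 ≤ 2*n), h2, zero_sub]
      rw [h1, ZMod.val_natCast_of_lt (by omega : 2*n - (j+1) < 2*n)]
    have hw : wt R n (-((j+1 : ℕ) : ZMod (2*n))) = (R:ℂ)⁻¹ := by
      unfold wt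
      rw [hval, if_neg (by omega)]
    rw [hcast, hw, inv_inv]
    ring_nf

lemma sum_two_aux {M : Type*} [AddCommMonoid M] [Module ℂ M] (n : ℕ) (hn : 1 ≤ n) (F : ℤ → M) :
    ∑ j ∈ Finset.Icc (-(n:ℤ)) (n:ℤ),
      (if j = (n:ℤ) then (1:ℂ) else if j = -(n:ℤ) then 1 else 0) • F j
      = F (n:ℤ) + F (-(n:ℤ)) := by
  have hne : (n:ℤ) ≠ -(n:ℤ) := by omega
  have hcong : ∀ j ∈ Finset.Icc (-(n:ℤ)) (n:ℤ),
      (if j = (n:ℤ) then (1:ℂ) else if j = -(n:ℤ) then 1 else 0) • F j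
      = (if j = (n:ℤ) then F j else 0) + (if j = -(n:ℤ) then F j else 0) := by
    intro j _
    by_cases h1 : j = (n:ℤ)
    · subst h1; simp [hne]
    · by_cases h2 : j = -(n:ℤ)
      · subst h2; simp [h1]
      · simp [h1, h2]
  rw [Finset.sum_congr rfl hcong, Finset.sum_add_distrib,
      Finset.sum_ite_eq' _ ((n:ℤ)) F, Finset.sum_ite_eq' _ (-(n:ℤ)) F,
      if_pos (by simp only [Finset.mem_Icc]; omega : (n:ℤ) ∈ Finset.Icc (-(n:ℤ)) (n:ℤ)),
      if_pos (by simp only [Finset.mem_Icc]; omega : -(n:ℤ) ∈ Finset.Icc (-(n:ℤ)) (n:ℤ))]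

lemma aux_mono {s S : ℝ} (hs : 0 < s) (hS : 1 ≤ S) (h1 : s ≤ S) (h2 : S⁻¹ ≤ s) :
    s + s⁻¹ ≤ S + S⁻¹ := by
  have hS0 : 0 < S := by linarith
  have e1 : s * s⁻¹ = 1 := mul_inv_cancel₀ (ne_of_gt hs)
  have e2 : S * S⁻¹ = 1 := mul_inv_cancel₀ (ne_of_gt hS0)
  have h3 : 1 ≤ s * S := by
    have := mul_le_mul_of_nonneg_right h2 (le_of_lt hS0)
    rw [inv_mul_cancel₀ (ne_of_gt hS0)] at this
    linarith
  nlinarith [mul_pos hs hS0, mul_nonneg (sub_nonneg.2 h1) (sub_nonneg.2 h3)]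

lemma sum_two_aux_mul (n : ℕ) (hn : 1 ≤ n) (F : ℤ → ℂ) :
    ∑ j ∈ Finset.Icc (-(n:ℤ)) (n:ℤ),
      (if j = (n:ℤ) then (1:ℂ) else if j = -(n:ℤ) then 1 else 0) * F j
      = F (n:ℤ) + F (-(n:ℤ)) := by
  simpa [smul_eq_mul] using sum_two_aux n hn F


/-- Suppose `K` is such that for every complex Hilbert space `H`, every bounded
invertible operator `T` on `H` with `‖T‖ ≤ R`, `‖T⁻¹‖ ≤ R`, and every Laurent
polynomial `f(z) = ∑_{j=-N}^{N} a_j z^j`, one has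
`‖f(T)‖ ≤ K · sup_{z ∈ A_R} |f(z)|`.  Then `K ≥ 2`.  In particular, the
optimal spectral constant `K(R)` of the annulus satisfies `K(R) ≥ 2`. -/
theorem annulus_spectral_constant_ge_two (R : ℝ) (hR : 1 < R) (K : ℝ)
    (hK : ∀ (H : Type) [NormedAddCommGroup H] [InnerProductSpace ℂ H] [CompleteSpace H]
        (T Tinv : H →L[ℂ] H), T ∘L Tinv = 1 → Tinv ∘L T = 1 → ‖T‖ ≤ R → ‖Tinv‖ ≤ R →
      ∀ (N : ℕ) (a : ℤ → ℂ),
        ‖∑ j ∈ Finset.Icc (-(N : ℤ)) (N : ℤ), a j • opZpow T Tinv j‖ ≤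
          K * sSup ((fun z : ℂ =>
            ‖∑ j ∈ Finset.Icc (-(N : ℤ)) (N : ℤ), a j * z ^ j‖) '' annulus R)) :
    2 ≤ K := by
  by_contra hcon
  push_neg at hcon
  have hR0 : (0:ℝ) < R := by linarith
  have key : ∀ n : ℕ, 1 ≤ n → 2 * R^n ≤ K * (R^n + (R^n)⁻¹) := by
    intro n hn
    haveI : NeZero (2*n) := ⟨by omega⟩
    have hbound := hK (EuclideanSpace ℂ (ZMod (2*n))) (Tmap R n) (Tinvmap R n)
      (Tmap_comp_Tinvmap R hR n) (Tinvmap_comp_Tmap R hR n)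
      (norm_Tmap_le R hR n) (norm_Tinvmap_le R hR n) n
      (fun j => if j = (n:ℤ) then (1:ℂ) else if j = -(n:ℤ) then 1 else 0)
    have hop : (∑ j ∈ Finset.Icc (-(n:ℤ)) (n:ℤ),
        (if j = (n:ℤ) then (1:ℂ) else if j = -(n:ℤ) then 1 else 0)
          • opZpow (Tmap R n) (Tinvmap R n) j)
        = (Tmap R n)^n + (Tinvmap R n)^n := by
      rw [sum_two_aux n hn (fun j => opZpow (Tmap R n) (Tinvmap R n) j)]
      have hlt : ¬ ((0:ℤ) ≤ -(n:ℤ)) := by omega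
      have hge : (0:ℤ) ≤ (n:ℤ) := Int.natCast_nonneg n
      congr 1
      all_goals unfold opZpow
      all_goals first
        | rw [if_neg hlt, neg_neg, Int.toNat_natCast]
        | rw [if_pos hge, Int.toNat_natCast]
    rw [hop] at hbound
    -- lower bound for the operator norm
    have happ : ((Tmap R n)^n + (Tinvmap R n)^n)
        (EuclideanSpace.single (0 : ZMod (2*n)) (1:ℂ))
        = EuclideanSpace.single ((n : ZMod (2*n))) ((2:ℂ) * (R:ℂ)^n) := by
      rw [ContinuousLinearMap.add_apply, T_pow_single R n (by omega) n le_rfl,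
          Tinv_pow_single R n (by omega) n le_rfl]
      have hneg : -((n : ℕ) : ZMod (2*n)) = ((n : ℕ) : ZMod (2*n)) := by
        have hz : ((n : ZMod (2*n))) + (n : ZMod (2*n)) = 0 := by
          rw [← Nat.cast_add]
          have h2 : ((n + n : ℕ) : ZMod (2*n)) = ((2*n : ℕ) : ZMod (2*n)) := by
            norm_num [two_mul]
          rw [h2, ZMod.natCast_self]
        rw [neg_eq_of_add_eq_zero_left hz]
      rw [hneg]
      ext k
      simp only [PiLp.add_apply, EuclideanSpace.single_apply]
      split <;> ring
    have hlow : 2 * R^n ≤ ‖(Tmap R n)^n + (Tinvmap R n)^n‖ := by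
      have h1 := ((Tmap R n)^n + (Tinvmap R n)^n).le_opNorm
        (EuclideanSpace.single (0 : ZMod (2*n)) (1:ℂ))
      rw [happ, EuclideanSpace.norm_single, EuclideanSpace.norm_single] at h1
      have h2 : ‖(2:ℂ) * (R:ℂ)^n‖ = 2 * R^n := by
        rw [norm_mul, norm_pow, Complex.norm_real, Real.norm_eq_abs, abs_of_pos hR0]
        norm_num
      have h3 : ‖(1:ℂ)‖ = 1 := by norm_num
      rw [h2, h3, mul_one] at h1
      exact h1
    -- upper bound for the sup
    have hsup : sSup ((fun z : ℂ =>
        ‖∑ j ∈ Finset.Icc (-(n:ℤ)) (n:ℤ),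
          (if j = (n:ℤ) then (1:ℂ) else if j = -(n:ℤ) then 1 else 0) * z ^ j‖) '' annulus R)
        ≤ R^n + (R^n)⁻¹ := by
      apply Real.sSup_le _ (by positivity)
      rintro y ⟨z, ⟨hz1, hz2⟩, rfl⟩
      have hz0 : 0 < ‖z‖ := by
        have : (0:ℝ) < 1/R := by positivity
        linarith
      have hzsum : (∑ j ∈ Finset.Icc (-(n:ℤ)) (n:ℤ),
          (if j = (n:ℤ) then (1:ℂ) else if j = -(n:ℤ) then 1 else 0) * z ^ j)
          = z^n + (z^n)⁻¹ := by
        rw [sum_two_aux_mul n hn (fun j => z ^ j)]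
        rw [zpow_natCast, zpow_neg, zpow_natCast]
      simp only [hzsum]
      calc ‖z^n + (z^n)⁻¹‖
          ≤ ‖z^n‖ + ‖(z^n)⁻¹‖ := norm_add_le _ _
        _ = ‖z‖^n + (‖z‖^n)⁻¹ := by rw [norm_pow, norm_inv, norm_pow]
        _ ≤ R^n + (R^n)⁻¹ := by
            apply aux_mono (pow_pos hz0 n) (one_le_pow₀ (le_of_lt hR))
            · exact pow_le_pow_left₀ (le_of_lt hz0) hz2 n
            · rw [← inv_pow]
              apply pow_le_pow_left₀ (by positivity)
              rw [inv_eq_one_div]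
              exact hz1
    -- combine
    have hs0 : 0 ≤ sSup ((fun z : ℂ =>
        ‖∑ j ∈ Finset.Icc (-(n:ℤ)) (n:ℤ),
          (if j = (n:ℤ) then (1:ℂ) else if j = -(n:ℤ) then 1 else 0) * z ^ j‖) '' annulus R) := by
      apply Real.sSup_nonneg
      rintro y ⟨z, _, rfl⟩
      exact norm_nonneg _
    have hK0 : 0 ≤ K := by
      by_contra hneg
      push_neg at hneg
      have h4 := mul_le_mul_of_nonneg_right (le_of_lt hneg) hs0
      rw [zero_mul] at h4
      have h5 := le_trans hlow hbound
      nlinarith [pow_pos hR0 n]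
    calc 2 * R^n ≤ ‖(Tmap R n)^n + (Tinvmap R n)^n‖ := hlow
      _ ≤ K * _ := hbound
      _ ≤ K * (R^n + (R^n)⁻¹) := mul_le_mul_of_nonneg_left hsup hK0
  -- derive the contradiction
  obtain ⟨m, hm⟩ := pow_unbounded_of_one_lt (K / (2 - K)) (show (1:ℝ) < R^2 by nlinarith)
  have hkey := key (m+1) (by omega)
  have hP : 0 < R^(m+1) := pow_pos hR0 _
  have e : (R^(m+1))⁻¹ * R^(m+1) = 1 := inv_mul_cancel₀ (ne_of_gt hP)
  have h2 : (2 - K) * (R^(m+1))^2 ≤ K := by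
    nlinarith [mul_le_mul_of_nonneg_right hkey (le_of_lt hP), e]
  have h3 : K / (2-K) < (R^(m+1))^2 := by
    calc K/(2-K) < (R^2)^m := hm
      _ ≤ (R^2)^(m+1) := pow_le_pow_right₀ (by nlinarith) (by omega)
      _ = (R^(m+1))^2 := by rw [← pow_mul, ← pow_mul, Nat.mul_comm]
  have h5 : K < (2-K) * (R^(m+1))^2 := by
    rw [div_lt_iff₀ (by linarith : (0:ℝ) < 2 - K)] at h3
    linarith
  linarith
end
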